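/- Let Ω ⊂ ℝ² be a bounded smooth domain, (ψ, A) a smooth solution of the Ginzburg–Landau system with curl A = 1 on ∂Ω and the second equation −∇⊥ curl A = (κH)⁻¹ Im(ψ̄ (∇ − iκHA)ψ) in Ω. Assume ‖(∇ − iκHA)ψ‖_{L^∞(Ω)} ≤ C₁κ and, for δ ∈ (0,1), that |ψ(x)| ≤ M for all x with dist(x, ∂Ω) ≥ κ^{−1+δ}, and |ψ| ≤ 1 everywhere. Then there is a constant C (depending on C₁, Ω) such that ‖curl A − 1‖_{L^∞(Ω)} ≤ C H^{−1} ( κ^{−1+δ} + M ). -/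

import Mathlib

open MeasureTheory

/-- First component of the magnetic gradient `(∇ - i a A)ψ`. -/
noncomputable def mg1 (a : ℝ) (A : ℝ × ℝ → ℝ × ℝ) (ψ : ℝ × ℝ → ℂ) (x : ℝ × ℝ) : ℂ :=
  fderiv ℝ ψ x (1, 0) - Complex.I * (a : ℂ) * ((A x).1 : ℂ) * ψ x

/-- Second component of the magnetic gradient `(∇ - i a A)ψ`. -/
noncomputable def mg2 (a : ℝ) (A : ℝ × ℝ → ℝ × ℝ) (ψ : ℝ × ℝ → ℂ) (x : ℝ × ℝ) : ℂ :=
  fderiv ℝ ψ x (0, 1) - Complex.I * (a : ℂ) * ((A x).2 : ℂ) * ψ x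

/-- `curl A = ∂₁A₂ - ∂₂A₁`. -/
noncomputable def curlA (A : ℝ × ℝ → ℝ × ℝ) (x : ℝ × ℝ) : ℝ :=
  fderiv ℝ (fun y => (A y).2) x (1, 0) - fderiv ℝ (fun y => (A y).1) x (0, 1)

lemma aux_curlA_contDiff {A : ℝ × ℝ → ℝ × ℝ} (hA : ContDiff ℝ 2 A) :
    ContDiff ℝ 1 (curlA A) := by
  have h2 : ContDiff ℝ 1 (fun x => fderiv ℝ (fun y => (A y).2) x ((1:ℝ), (0:ℝ))) :=
    (hA.snd.fderiv_right (by norm_num)).clm_apply contDiff_const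
  have h1 : ContDiff ℝ 1 (fun x => fderiv ℝ (fun y => (A y).1) x ((0:ℝ), (1:ℝ))) :=
    (hA.fst.fderiv_right (by norm_num)).clm_apply contDiff_const
  exact h2.sub h1

lemma aux_hasDerivAt_line {F : ℝ × ℝ → ℝ} (hF : ContDiff ℝ 1 F) (x v : ℝ × ℝ) (t : ℝ) :
    HasDerivAt (fun s => F (x + s • v)) (fderiv ℝ F (x + t • v) v) t := by
  have hline : HasDerivAt (fun s : ℝ => x + s • v) v t := by
    simpa using ((hasDerivAt_id t).smul_const v).const_add x
  have hF' := ((hF.differentiable one_ne_zero) (x + t • v)).hasFDerivAt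
  exact hF'.comp_hasDerivAt t hline

lemma aux_clm_decomp (L : (ℝ × ℝ) →L[ℝ] ℝ) (v : ℝ × ℝ) :
    L v = v.1 * L (1, 0) + v.2 * L (0, 1) := by
  have hv : v.1 • ((1:ℝ), (0:ℝ)) + v.2 • ((0:ℝ), (1:ℝ)) = v := by
    simp [Prod.ext_iff]
  have h : L v = L (v.1 • ((1:ℝ), (0:ℝ))) + L (v.2 • ((0:ℝ), (1:ℝ))) := by
    rw [← map_add, hv]
  rw [h, L.map_smul, L.map_smul, smul_eq_mul, smul_eq_mul]


set_option maxHeartbeats 2000000 in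
/-- estimate `‖curl A - 1‖_∞ ≤ C H⁻¹ (κ^{-1+δ} + M)` for solutions of
the second Ginzburg–Landau equation with `curl A = 1` on `∂Ω`. -/
theorem stmt9 (Ω : Set (ℝ × ℝ)) (hΩo : IsOpen Ω) (hΩb : Bornology.IsBounded Ω)
    (δ : ℝ) (hδ : δ ∈ Set.Ioo (0 : ℝ) 1) (C₁ : ℝ) (hC₁ : 0 < C₁) :
    ∃ C > 0, ∀ (κ H : ℝ) (ψ : ℝ × ℝ → ℂ) (A : ℝ × ℝ → ℝ × ℝ),
      0 < κ → κ / 2 ≤ H →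
      ContDiff ℝ 2 ψ → ContDiff ℝ 2 A →
      -- `curl A = 1` on `∂Ω`
      (∀ x ∈ frontier Ω, curlA A x = 1) →
      -- second Ginzburg–Landau equation `-∇⊥ curl A = (κH)⁻¹ Im(ψ̄(∇ - iκHA)ψ)` in `Ω`
      (∀ x ∈ Ω, fderiv ℝ (curlA A) x (0, 1) =
        (κ * H)⁻¹ * ((starRingEnd ℂ) (ψ x) * mg1 (κ * H) A ψ x).im) →
      (∀ x ∈ Ω, -(fderiv ℝ (curlA A) x (1, 0)) =
        (κ * H)⁻¹ * ((starRingEnd ℂ) (ψ x) * mg2 (κ * H) A ψ x).im) →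
      -- a priori bound on the magnetic gradient
      (∀ x ∈ Ω, Real.sqrt (‖mg1 (κ * H) A ψ x‖ ^ 2 + ‖mg2 (κ * H) A ψ x‖ ^ 2) ≤ C₁ * κ) →
      ∀ M : ℝ, 0 ≤ M →
        -- `|ψ| ≤ M` at distance `≥ κ^{-1+δ}` from the boundary, `|ψ| ≤ 1` everywhere
        (∀ x ∈ Ω, κ ^ (δ - 1) ≤ Metric.infDist x (frontier Ω) → ‖ψ x‖ ≤ M) →
        (∀ x ∈ Ω, ‖ψ x‖ ≤ 1) →
        ∀ x ∈ Ω, |curlA A x - 1| ≤ C * H⁻¹ * (κ ^ (δ - 1) + M) := by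
  obtain ⟨hδ0, hδ1⟩ := hδ
  have hdiam : (0:ℝ) ≤ Metric.diam Ω := Metric.diam_nonneg
  set D : ℝ := Metric.diam Ω + 1 with hDdef
  have hD1 : 1 ≤ D := by linarith
  refine ⟨2 * C₁ * D, by positivity, ?_⟩
  intro κ H ψ A hκ hκH hψ hA hbc heq1 heq2 hgrad M hM hMψ hψ1 x hx
  have hH : 0 < H := lt_of_lt_of_le (by linarith) hκH
  have hrp : 0 < κ ^ (δ - 1) := Real.rpow_pos_of_pos hκ _
  -- frontier facts
  have hfr_ne : (frontier Ω).Nonempty := by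
    rw [nonempty_frontier_iff]
    refine ⟨⟨x, hx⟩, fun h => ?_⟩
    rw [h] at hΩb
    exact NormedSpace.unbounded_univ ℝ (ℝ × ℝ) hΩb
  have hfr_cp : IsCompact (frontier Ω) :=
    Metric.isCompact_of_isClosed_isBounded isClosed_frontier
      (hΩb.closure.subset frontier_subset_closure)
  obtain ⟨p, hp, hpd⟩ := hfr_cp.exists_infDist_eq_dist hfr_ne x
  set d : ℝ := Metric.infDist x (frontier Ω) with hddef
  have hxnf : x ∉ frontier Ω := by
    rw [hΩo.frontier_eq]; exact fun h => h.2 hx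
  have hd0 : 0 < d :=
    (isClosed_frontier.notMem_iff_infDist_pos hfr_ne).mp hxnf
  set v : ℝ × ℝ := p - x with hvdef
  have hvnorm : ‖v‖ = d := by
    rw [hvdef, ← dist_eq_norm', hpd]
  have hdD : d ≤ D := by
    have h1 : dist x p ≤ Metric.diam (closure Ω) :=
      Metric.dist_le_diam_of_mem hΩb.closure (subset_closure hx) (frontier_subset_closure hp)
    rw [Metric.diam_closure] at h1
    rw [hpd]; linarith
  -- lower bound for distance along the segment
  have hlow : ∀ s : ℝ, 0 ≤ s → (1 - s) * d ≤ Metric.infDist (x + s • v) (frontier Ω) := by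
    intro s hs
    have h1 : Metric.infDist x (frontier Ω) ≤
        Metric.infDist (x + s • v) (frontier Ω) + dist x (x + s • v) :=
      Metric.infDist_le_infDist_add_dist
    have h2 : dist x (x + s • v) = s * d := by
      rw [dist_self_add_right, norm_smul, Real.norm_eq_abs, abs_of_nonneg hs, hvnorm]
    rw [h2, ← hddef] at h1
    nlinarith
  -- segment points are in Ω
  have hseg : ∀ t ∈ Set.Ico (0:ℝ) 1, x + t • v ∈ Ω := by
    rintro t ⟨ht0, ht1⟩
    by_contra hnot
    have hnof : ∀ z ∈ segment ℝ x (x + t • v), z ∉ frontier Ω := by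
      intro z hz hzf
      rw [segment_eq_image'] at hz
      obtain ⟨θ, hθ, rfl⟩ := hz
      have h0 : x + θ • (x + t • v - x) = x + (θ * t) • v := by
        rw [add_sub_cancel_left, smul_smul]
      simp only [h0] at hzf
      have hθt0 : 0 ≤ θ * t := mul_nonneg hθ.1 ht0
      have hθt1 : θ * t < 1 := lt_of_le_of_lt (by nlinarith [hθ.2]) ht1
      have hl := hlow (θ * t) hθt0
      rw [Metric.infDist_zero_of_mem hzf] at hl
      nlinarith
    have hpre := (convex_segment x (x + t • v)).isPreconnected
    have hsub : segment ℝ x (x + t • v) ⊆ Ω ∪ (closure Ω)ᶜ := by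
      intro z hz
      by_cases hzΩ : z ∈ Ω
      · exact Or.inl hzΩ
      · refine Or.inr fun hzc => hnof z hz ?_
        rw [hΩo.frontier_eq]; exact ⟨hzc, hzΩ⟩
    have hne1 : (segment ℝ x (x + t • v) ∩ Ω).Nonempty :=
      ⟨x, left_mem_segment ℝ _ _, hx⟩
    have hne2 : (segment ℝ x (x + t • v) ∩ (closure Ω)ᶜ).Nonempty := by
      refine ⟨x + t • v, right_mem_segment ℝ _ _, fun hc => ?_⟩
      exact hnof _ (right_mem_segment ℝ _ _) (by rw [hΩo.frontier_eq]; exact ⟨hc, hnot⟩)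
    obtain ⟨z, -, hz1, hz2⟩ :=
      hpre Ω (closure Ω)ᶜ hΩo isClosed_closure.isOpen_compl hsub hne1 hne2
    exact hz2 (subset_closure hz1)
  -- derivative along the segment
  have hFc1 : ContDiff ℝ 1 (curlA A) := aux_curlA_contDiff hA
  set g : ℝ → ℝ := fun s => curlA A (x + s • v) with hgdef
  set g' : ℝ → ℝ := fun t => fderiv ℝ (curlA A) (x + t • v) v with hg'def
  have hg : ∀ t : ℝ, HasDerivAt g (g' t) t := fun t => aux_hasDerivAt_line hFc1 x v t
  have hg'cont : Continuous g' := by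
    have h1 : Continuous (fderiv ℝ (curlA A)) := hFc1.continuous_fderiv one_ne_zero
    exact (h1.comp (by continuity)).clm_apply continuous_const
  set K : ℝ := 2 * d * C₁ * H⁻¹ with hKdef
  have hK0 : 0 ≤ K := by positivity
  have hv1 : |v.1| ≤ d := by
    rw [← hvnorm, ← Real.norm_eq_abs]; exact norm_fst_le v
  have hv2 : |v.2| ≤ d := by
    rw [← hvnorm, ← Real.norm_eq_abs]; exact norm_snd_le v
  have hinv : (0:ℝ) ≤ (κ * H)⁻¹ := by positivity
  have him : ∀ (z w : ℂ), |((starRingEnd ℂ) z * w).im| ≤ ‖z‖ * ‖w‖ := by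
    intro z w
    have h2 : ‖(starRingEnd ℂ) z * w‖ = ‖z‖ * ‖w‖ := by
      rw [norm_mul, Complex.norm_conj]
    rw [← h2]
    exact Complex.abs_im_le_norm _
  -- pointwise bound on [0,1)
  have hB : ∀ t ∈ Set.Ico (0:ℝ) 1, |g' t| ≤ K * ‖ψ (x + t • v)‖ := by
    intro t ht
    have hyΩ : x + t • v ∈ Ω := hseg t ht
    set y := x + t • v with hy
    have hsq := hgrad y hyΩ
    have hmg1 : ‖mg1 (κ*H) A ψ y‖ ≤ C₁ * κ := by
      have h1 : ‖mg1 (κ*H) A ψ y‖ = Real.sqrt (‖mg1 (κ*H) A ψ y‖^2) :=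
        (Real.sqrt_sq (norm_nonneg _)).symm
      rw [h1]
      exact le_trans (Real.sqrt_le_sqrt (by nlinarith [sq_nonneg ‖mg2 (κ*H) A ψ y‖])) hsq
    have hmg2 : ‖mg2 (κ*H) A ψ y‖ ≤ C₁ * κ := by
      have h1 : ‖mg2 (κ*H) A ψ y‖ = Real.sqrt (‖mg2 (κ*H) A ψ y‖^2) :=
        (Real.sqrt_sq (norm_nonneg _)).symm
      rw [h1]
      exact le_trans (Real.sqrt_le_sqrt (by nlinarith [sq_nonneg ‖mg1 (κ*H) A ψ y‖])) hsq
    set L := fderiv ℝ (curlA A) y with hL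
    have hL1 : |L (1,0)| ≤ (κ*H)⁻¹ * (‖ψ y‖ * (C₁ * κ)) := by
      have he := heq2 y hyΩ
      have heL : L (1,0) = -((κ*H)⁻¹ * (((starRingEnd ℂ) (ψ y) * mg2 (κ*H) A ψ y).im)) := by
        rw [hL]; linarith
      rw [heL, abs_neg, abs_mul, abs_of_nonneg hinv]
      exact mul_le_mul_of_nonneg_left
        (le_trans (him _ _) (mul_le_mul_of_nonneg_left hmg2 (norm_nonneg _))) hinv
    have hL2 : |L (0,1)| ≤ (κ*H)⁻¹ * (‖ψ y‖ * (C₁ * κ)) := by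
      have he := heq1 y hyΩ
      rw [hL, he, abs_mul, abs_of_nonneg hinv]
      exact mul_le_mul_of_nonneg_left
        (le_trans (him _ _) (mul_le_mul_of_nonneg_left hmg1 (norm_nonneg _))) hinv
    have hgt : g' t = L v := by rw [hg'def]
    calc |g' t| = |v.1 * L (1,0) + v.2 * L (0,1)| := by rw [hgt, aux_clm_decomp]
      _ ≤ |v.1| * |L (1,0)| + |v.2| * |L (0,1)| := by
          refine le_trans (abs_add_le _ _) ?_
          rw [abs_mul, abs_mul]
      _ ≤ d * ((κ*H)⁻¹ * (‖ψ y‖ * (C₁ * κ))) + d * ((κ*H)⁻¹ * (‖ψ y‖ * (C₁ * κ))) := by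
          exact add_le_add (mul_le_mul hv1 hL1 (abs_nonneg _) hd0.le)
            (mul_le_mul hv2 hL2 (abs_nonneg _) hd0.le)
      _ = K * ‖ψ y‖ := by
          rw [hKdef]; field_simp; ring
  -- uniform bound on [0,1]
  have hB1 : ∀ t ∈ Set.Icc (0:ℝ) 1, |g' t| ≤ K := by
    intro t ht
    rcases lt_or_eq_of_le ht.2 with ht1 | ht1
    · refine le_trans (hB t ⟨ht.1, ht1⟩) ?_
      have := hψ1 _ (hseg t ⟨ht.1, ht1⟩)
      nlinarith
    · subst ht1
      have hcont : Filter.Tendsto (fun s => |g' s|) (nhdsWithin 1 (Set.Iio 1)) (nhds (|g' 1|)) :=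
        (hg'cont.abs.continuousAt).continuousWithinAt
      refine le_of_tendsto hcont ?_
      filter_upwards [Ioo_mem_nhdsLT_of_mem (Set.mem_Ioc.mpr ⟨zero_lt_one, le_rfl⟩)] with s hs
      refine le_trans (hB s ⟨hs.1.le, hs.2⟩) ?_
      have := hψ1 _ (hseg s ⟨hs.1.le, hs.2⟩)
      nlinarith
  -- FTC
  have hint : IntervalIntegrable g' volume 0 1 := hg'cont.intervalIntegrable 0 1
  have hFTC : ∫ t in (0:ℝ)..1, g' t = g 1 - g 0 :=
    intervalIntegral.integral_eq_sub_of_hasDerivAt (fun t _ => hg t) hint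
  have hg1 : g 1 = 1 := by
    have hxp : x + (1:ℝ) • v = p := by rw [one_smul, hvdef]; abel
    show curlA A (x + (1:ℝ) • v) = 1
    rw [hxp]; exact hbc p hp
  have hg0 : g 0 = curlA A x := by
    rw [show g 0 = curlA A (x + (0:ℝ) • v) from rfl]; norm_num
  have habs : |curlA A x - 1| ≤ ∫ t in (0:ℝ)..1, |g' t| := by
    have h1 := intervalIntegral.norm_integral_le_integral_norm (f := g') (μ := volume)
      (a := 0) (b := 1) zero_le_one
    rw [hFTC, hg1, hg0] at h1
    simp only [Real.norm_eq_abs] at h1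
    calc |curlA A x - 1| = |1 - curlA A x| := abs_sub_comm _ _
      _ ≤ ∫ t in (0:ℝ)..1, |g' t| := h1
  have hintabs : ∀ a b : ℝ, IntervalIntegrable (fun t => |g' t|) volume a b :=
    fun a b => (hg'cont.abs).intervalIntegrable a b
  have hHinv : (0:ℝ) < H⁻¹ := by positivity
  by_cases hcase : d ≤ κ ^ (δ - 1)
  · -- short distance: uniform bound suffices
    have h2 : (∫ t in (0:ℝ)..1, |g' t|) ≤ ∫ _t in (0:ℝ)..1, K :=
      intervalIntegral.integral_mono_on zero_le_one (hintabs 0 1)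
        (intervalIntegrable_const) hB1
    rw [intervalIntegral.integral_const] at h2
    simp only [smul_eq_mul, sub_zero, one_mul] at h2
    have hKle : K ≤ 2 * C₁ * H⁻¹ * κ ^ (δ - 1) := by
      rw [hKdef]; nlinarith
    calc |curlA A x - 1| ≤ K := le_trans habs h2
      _ ≤ 2 * C₁ * H⁻¹ * κ ^ (δ - 1) := hKle
      _ ≤ 2 * C₁ * D * H⁻¹ * (κ ^ (δ - 1) + M) := by
          nlinarith [mul_nonneg (mul_nonneg (mul_nonneg (mul_nonneg
              (by norm_num : (0:ℝ) ≤ 2) hC₁.le) (by linarith : (0:ℝ) ≤ D - 1))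
              hHinv.le) hrp.le,
            mul_nonneg (mul_nonneg (mul_nonneg (mul_nonneg
              (by norm_num : (0:ℝ) ≤ 2) hC₁.le) (by linarith : (0:ℝ) ≤ D))
              hHinv.le) hM]
  · -- long distance: split the integral
    push_neg at hcase
    set s : ℝ := 1 - κ ^ (δ - 1) / d with hsdef
    have hs0 : 0 < s := by
      rw [hsdef]
      have : κ ^ (δ - 1) / d < 1 := (div_lt_one hd0).mpr hcase
      linarith
    have hs1 : s < 1 := by
      rw [hsdef]
      have : 0 < κ ^ (δ - 1) / d := by positivity
      linarith
    have hBM : ∀ t ∈ Set.Icc (0:ℝ) s, |g' t| ≤ K * M := by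
      intro t ht
      have ht1 : t < 1 := lt_of_le_of_lt ht.2 hs1
      have hyΩ : x + t • v ∈ Ω := hseg t ⟨ht.1, ht1⟩
      refine le_trans (hB t ⟨ht.1, ht1⟩) ?_
      have hdist : κ ^ (δ - 1) ≤ Metric.infDist (x + t • v) (frontier Ω) := by
        refine le_trans ?_ (hlow t ht.1)
        have h3 : (1 - s) * d = κ ^ (δ - 1) := by
          rw [hsdef]; field_simp; ring
        nlinarith [ht.2]
      have := hMψ _ hyΩ hdist
      nlinarith
    have hsplit : (∫ t in (0:ℝ)..1, |g' t|) =
        (∫ t in (0:ℝ)..s, |g' t|) + ∫ t in s..(1:ℝ), |g' t| :=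
      (intervalIntegral.integral_add_adjacent_intervals (hintabs 0 s) (hintabs s 1)).symm
    have hpart1 : (∫ t in (0:ℝ)..s, |g' t|) ≤ K * M := by
      have h2 : (∫ t in (0:ℝ)..s, |g' t|) ≤ ∫ _t in (0:ℝ)..s, K * M :=
        intervalIntegral.integral_mono_on hs0.le (hintabs 0 s) intervalIntegrable_const hBM
      rw [intervalIntegral.integral_const] at h2
      simp only [smul_eq_mul, sub_zero] at h2
      nlinarith [mul_nonneg hK0 hM]
    have hpart2 : (∫ t in s..(1:ℝ), |g' t|) ≤ 2 * C₁ * H⁻¹ * κ ^ (δ - 1) := by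
      have h2 : (∫ t in s..(1:ℝ), |g' t|) ≤ ∫ _t in s..(1:ℝ), K := by
        refine intervalIntegral.integral_mono_on hs1.le (hintabs s 1) intervalIntegrable_const ?_
        intro t ht
        exact hB1 t ⟨le_trans hs0.le ht.1, ht.2⟩
      rw [intervalIntegral.integral_const] at h2
      simp only [smul_eq_mul] at h2
      have h3 : (1 - s) * K = 2 * C₁ * H⁻¹ * κ ^ (δ - 1) := by
        rw [hsdef, hKdef]; field_simp; ring
      exact le_of_le_of_eq h2 h3
    have hKM : K * M ≤ 2 * C₁ * D * H⁻¹ * M := by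
      rw [hKdef]
      nlinarith [mul_nonneg (mul_nonneg (mul_nonneg (mul_nonneg
        (by norm_num : (0:ℝ) ≤ 2) hC₁.le) (by linarith : (0:ℝ) ≤ D - d))
        hHinv.le) hM]
    calc |curlA A x - 1| ≤ (∫ t in (0:ℝ)..s, |g' t|) + ∫ t in s..(1:ℝ), |g' t| := by
          rw [← hsplit]; exact habs
      _ ≤ K * M + 2 * C₁ * H⁻¹ * κ ^ (δ - 1) := add_le_add hpart1 hpart2
      _ ≤ 2 * C₁ * D * H⁻¹ * (κ ^ (δ - 1) + M) := by
          have h5 : 2 * C₁ * H⁻¹ * κ ^ (δ - 1) ≤ 2 * C₁ * D * H⁻¹ * κ ^ (δ - 1) := by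
            nlinarith [mul_nonneg (mul_nonneg (mul_nonneg (mul_nonneg
              (by norm_num : (0:ℝ) ≤ 2) hC₁.le) (by linarith : (0:ℝ) ≤ D - 1))
              hHinv.le) hrp.le]
          nlinarith [hKM, h5]
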